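/- (Variant loss, approximate minimizer.) Let α, β > 0, let Σ ⊆ X, and let δ, μ, ϵ > 0 satisfy ϵ ≤ δ^α ≤ μ²/2. Assume every f ∈ K admits g ∈ Σ ∩ K with ‖f − g‖_X ≤ δ. Let f ∈ K and w := λ(f). Suppose f̃ = ι(h̃) with h̃ ∈ Y and ι(h̃) ∈ Σ satisfies ‖λ(ι(h̃)) − w‖^α + μ‖h̃‖_Y^β ≤ ‖λ(ι(h)) − w‖^α + μ‖h‖_Y^β + ϵ for every h ∈ Y with ι(h) ∈ Σ. Then, with ε := max( C₀((1+μ)^{1/β} − 1), (μ² + μ)^{1/α} ), one has ‖f − f̃‖_X ≤ ε + 2 R(K(w, 2ε))_X. -/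

import Mathlib

/-- Chebyshev radius of a set `S` in a normed space `X`:
`R(S) = inf_{z ∈ X} sup_{f ∈ S} ‖f - z‖`. -/
noncomputable def chebRad {X : Type*} [NormedAddCommGroup X] (S : Set X) : ℝ :=
  ⨅ z : X, ⨆ f : S, ‖(f : X) - z‖

/-- Weighted euclidean norm on `ℝ^m`: `‖v‖ = ( m⁻¹ ∑ v_j² )^{1/2}`. -/
noncomputable def wNorm {m : ℕ} (v : Fin m → ℝ) : ℝ :=
  Real.sqrt ((∑ j, v j ^ 2) / m)

lemma wNorm_nonneg' {m : ℕ} (v : Fin m → ℝ) : 0 ≤ wNorm v :=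
  Real.sqrt_nonneg _

lemma wNorm_le' {m : ℕ} {v : Fin m → ℝ} {c : ℝ} (hc : 0 ≤ c)
    (h : ∀ j, |v j| ≤ c) : wNorm v ≤ c := by
  unfold wNorm
  rcases Nat.eq_zero_or_pos m with hm | hm
  · subst hm; simpa using hc
  rw [show c = Real.sqrt (c ^ 2) from (Real.sqrt_sq hc).symm]
  apply Real.sqrt_le_sqrt
  rw [div_le_iff₀ (by positivity)]
  calc ∑ j, v j ^ 2 ≤ ∑ _j : Fin m, c ^ 2 := by
        apply Finset.sum_le_sum
        intro j _
        have := h j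
        nlinarith [abs_nonneg (v j), sq_abs (v j)]
    _ = c ^ 2 * m := by simp [mul_comm]

lemma wNorm_eq' {m : ℕ} (v : Fin m → ℝ) :
    wNorm v = ‖(WithLp.equiv 2 (Fin m → ℝ)).symm v‖ / Real.sqrt m := by
  unfold wNorm
  rw [EuclideanSpace.norm_eq, ← Real.sqrt_div (by positivity)]
  simp [Real.norm_eq_abs, sq_abs]

lemma wNorm_triangle' {m : ℕ} (v w : Fin m → ℝ) :
    wNorm (fun j => v j + w j) ≤ wNorm v + wNorm w := by
  rw [wNorm_eq' (fun j => v j + w j), wNorm_eq' v, wNorm_eq' w, ← add_div]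
  gcongr
  have : (WithLp.equiv 2 (Fin m → ℝ)).symm (fun j => v j + w j)
      = (WithLp.equiv 2 (Fin m → ℝ)).symm v + (WithLp.equiv 2 (Fin m → ℝ)).symm w := by
    rw [WithLp.equiv_symm_apply, ← WithLp.toLp_add]; rfl
  rw [this]
  exact norm_add_le _ _

set_option maxHeartbeats 1000000 in
/-- Variant loss with powers, approximate minimizer: an `ϵ`-approximate minimizer
of `g ↦ ‖λ(g) − w‖^α + μ‖g‖_Y^β` over `Σ`, with `ϵ ≤ δ^α ≤ μ²/2`, satisfies, with
`ε := max( C₀((1+μ)^{1/β} − 1), (μ²+μ)^{1/α} )`,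
`‖f − f̃‖_X ≤ ε + 2 R(K(w, 2ε))_X`. -/
theorem stmt_12
    {X Y : Type*} [NormedAddCommGroup X] [NormedSpace ℝ X] [CompleteSpace X]
    [NormedAddCommGroup Y] [NormedSpace ℝ Y]
    {m : ℕ} (hm : 0 < m)
    (lam : Fin m → X →L[ℝ] ℝ) (hlam : ∀ j, ‖lam j‖ ≤ 1)
    (ι : Y →ₗ[ℝ] X) (hι : Function.Injective ι)
    (C₀ : ℝ) (hC₀ : ∀ g : Y, ‖ι g‖ ≤ C₀ * ‖g‖)
    (hK : IsCompact (ι '' {g : Y | ‖g‖ ≤ 1}))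
    (α β : ℝ) (hα : 0 < α) (hβ : 0 < β)
    (Sig : Set X) (δ μ ϵ : ℝ) (hδ : 0 < δ) (hμ : 0 < μ) (hϵ : 0 < ϵ)
    (hϵδ : ϵ ≤ δ ^ α) (hδμ : δ ^ α ≤ μ ^ 2 / 2)
    (happrox : ∀ f ∈ ι '' {g : Y | ‖g‖ ≤ 1},
      ∃ g ∈ Sig ∩ ι '' {g : Y | ‖g‖ ≤ 1}, ‖f - g‖ ≤ δ)
    (f : X) (hf : f ∈ ι '' {g : Y | ‖g‖ ≤ 1})
    (ftil : Y) (hftil : ι ftil ∈ Sig)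
    (hmin : ∀ h : Y, ι h ∈ Sig →
      wNorm (fun j => lam j (ι ftil) - lam j f) ^ α + μ * ‖ftil‖ ^ β ≤
        wNorm (fun j => lam j (ι h) - lam j f) ^ α + μ * ‖h‖ ^ β + ϵ) :
    ‖f - ι ftil‖ ≤
      max (C₀ * ((1 + μ) ^ (1 / β) - 1)) ((μ ^ 2 + μ) ^ (1 / α)) +
      2 * chebRad {u ∈ ι '' {g : Y | ‖g‖ ≤ 1} |
        wNorm (fun j => lam j u - lam j f) ≤
          2 * max (C₀ * ((1 + μ) ^ (1 / β) - 1)) ((μ ^ 2 + μ) ^ (1 / α))} := by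
  set E : ℝ := max (C₀ * ((1 + μ) ^ (1 / β) - 1)) ((μ ^ 2 + μ) ^ (1 / α)) with hE
  have hE0 : 0 ≤ E :=
    le_trans (Real.rpow_nonneg (by positivity) _) (le_max_right _ _)
  -- choose a good approximant of f in Sig ∩ K
  obtain ⟨g, ⟨hgSig, hgK⟩, hfg⟩ := happrox f hf
  obtain ⟨h, hh1, rfl⟩ := hgK
  -- bound the loss at the approximant
  have hwh : wNorm (fun j => lam j (ι h) - lam j f) ≤ δ := by
    apply wNorm_le' hδ.le
    intro j
    have h1 : |lam j (ι h) - lam j f| = |lam j (ι h - f)| := by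
      rw [map_sub]
    rw [h1]
    calc |lam j (ι h - f)| ≤ ‖lam j‖ * ‖ι h - f‖ := (lam j).le_opNorm _
      _ ≤ 1 * ‖ι h - f‖ := by
          apply mul_le_mul_of_nonneg_right (hlam j) (norm_nonneg _)
      _ = ‖f - ι h‖ := by rw [one_mul, norm_sub_rev]
      _ ≤ δ := hfg
  have hwhα : wNorm (fun j => lam j (ι h) - lam j f) ^ α ≤ δ ^ α :=
    Real.rpow_le_rpow (wNorm_nonneg' _) hwh hα.le
  have hhβ : ‖h‖ ^ β ≤ 1 := Real.rpow_le_one (norm_nonneg _) hh1 hβ.le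
  set A : ℝ := wNorm (fun j => lam j (ι ftil) - lam j f) with hA
  have hA0 : 0 ≤ A := wNorm_nonneg' _
  have hAα0 : 0 ≤ A ^ α := Real.rpow_nonneg hA0 _
  have hfβ0 : 0 ≤ ‖ftil‖ ^ β := Real.rpow_nonneg (norm_nonneg _) _
  have hchain : A ^ α + μ * ‖ftil‖ ^ β ≤ μ ^ 2 + μ := by
    have := hmin h hgSig
    nlinarith
  -- bound on ‖ftil‖
  have hfβ : ‖ftil‖ ^ β ≤ 1 + μ := by
    have h1 : μ * ‖ftil‖ ^ β ≤ μ * (1 + μ) := by nlinarith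
    exact le_of_mul_le_mul_left h1 hμ
  have hftil_norm : ‖ftil‖ ≤ (1 + μ) ^ (1 / β) := by
    have h1 : (‖ftil‖ ^ β) ^ (1 / β) ≤ (1 + μ) ^ (1 / β) :=
      Real.rpow_le_rpow hfβ0 hfβ (by positivity)
    rw [one_div]
    rwa [one_div, Real.rpow_rpow_inv (norm_nonneg _) hβ.ne'] at h1
  -- bound on A
  have hAμ : A ^ α ≤ μ ^ 2 + μ := by nlinarith
  have hAE : A ≤ E := by
    have h1 : (A ^ α) ^ (1 / α) ≤ (μ ^ 2 + μ) ^ (1 / α) :=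
      Real.rpow_le_rpow hAα0 hAμ (by positivity)
    rw [one_div, Real.rpow_rpow_inv hA0 hα.ne'] at h1
    refine le_trans h1 ?_
    have h2 : (μ ^ 2 + μ) ^ α⁻¹ = (μ ^ 2 + μ) ^ (1 / α) := by rw [one_div]
    rw [h2, hE]
    exact le_max_right _ _
  -- the rescaled minimizer
  set c : ℝ := max 1 ‖ftil‖ with hc
  have hc1 : (1 : ℝ) ≤ c := le_max_left _ _
  have hcpos : 0 < c := lt_of_lt_of_le one_pos hc1
  set fh : Y := c⁻¹ • ftil with hfh
  have hfhK : ι fh ∈ ι '' {g : Y | ‖g‖ ≤ 1} := by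
    refine ⟨fh, ?_, rfl⟩
    simp only [Set.mem_setOf_eq, hfh, norm_smul, Real.norm_eq_abs,
      abs_inv, abs_of_pos hcpos]
    calc c⁻¹ * ‖ftil‖ ≤ c⁻¹ * c := by
          apply mul_le_mul_of_nonneg_left (le_max_right _ _) (by positivity)
      _ = 1 := inv_mul_cancel₀ hcpos.ne'
  -- distance between the minimizer and its rescaling
  have hdist : ‖ι ftil - ι fh‖ ≤ E := by
    have hd1 : ι ftil - ι fh = ι ((1 - c⁻¹) • ftil) := by
      rw [map_smul, sub_smul, one_smul, map_sub, map_smul]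
    have hcinv : c⁻¹ ≤ 1 := inv_le_one_of_one_le₀ hc1
    rw [hd1]
    calc ‖ι ((1 - c⁻¹) • ftil)‖ ≤ C₀ * ‖(1 - c⁻¹) • ftil‖ := hC₀ _
      _ = C₀ * ((1 - c⁻¹) * ‖ftil‖) := by
          rw [norm_smul, Real.norm_eq_abs, abs_of_nonneg (by linarith)]
      _ ≤ E := by
          rcases le_or_gt ‖ftil‖ 1 with hle | hlt
          · have hceq : c = 1 := max_eq_left hle
            rw [hceq]
            simp [hE0]
          · have hceq : c = ‖ftil‖ := max_eq_right hlt.le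
            have hne : ‖ftil‖ ≠ 0 := by positivity
            have heq : (1 - c⁻¹) * ‖ftil‖ = ‖ftil‖ - 1 := by
              rw [hceq]; field_simp
            rw [heq]
            have hC₀0 : 0 ≤ C₀ := by
              have h1 := hC₀ ftil
              have h2 := norm_nonneg (ι ftil)
              nlinarith
            calc C₀ * (‖ftil‖ - 1) ≤ C₀ * ((1 + μ) ^ (1 / β) - 1) := by
                  apply mul_le_mul_of_nonneg_left (by linarith) hC₀0
              _ ≤ E := le_max_left _ _
  -- membership of f and ι fh in the constraint set
  set S : Set X := {u ∈ ι '' {g : Y | ‖g‖ ≤ 1} |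
      wNorm (fun j => lam j u - lam j f) ≤ 2 * E} with hS
  have hfS : f ∈ S := by
    refine ⟨hf, ?_⟩
    have : (fun j => lam j f - lam j f) = fun _ : Fin m => (0 : ℝ) := by
      funext j; ring
    rw [this]
    have : wNorm (fun _ : Fin m => (0 : ℝ)) = 0 := by
      unfold wNorm; simp
    rw [this]; linarith
  have hfhS : ι fh ∈ S := by
    refine ⟨hfhK, ?_⟩
    have htri : wNorm (fun j => lam j (ι fh) - lam j f) ≤
        wNorm (fun j => lam j (ι fh) - lam j (ι ftil)) + A := by
      have h1 : (fun j => lam j (ι fh) - lam j f) =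
          fun j => (lam j (ι fh) - lam j (ι ftil)) + (lam j (ι ftil) - lam j f) := by
        funext j; ring
      rw [h1]
      exact wNorm_triangle' _ _
    have hw1 : wNorm (fun j => lam j (ι fh) - lam j (ι ftil)) ≤ E := by
      apply le_trans _ hdist
      apply wNorm_le' (norm_nonneg _)
      intro j
      have h1 : lam j (ι fh) - lam j (ι ftil) = lam j (ι fh - ι ftil) := by
        rw [map_sub]
      rw [h1]
      calc |lam j (ι fh - ι ftil)| ≤ ‖lam j‖ * ‖ι fh - ι ftil‖ := (lam j).le_opNorm _
        _ ≤ 1 * ‖ι fh - ι ftil‖ :=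
            mul_le_mul_of_nonneg_right (hlam j) (norm_nonneg _)
        _ = ‖ι ftil - ι fh‖ := by rw [one_mul, norm_sub_rev]
    linarith
  -- Chebyshev radius bound
  have hcheb : ‖f - ι fh‖ ≤ 2 * chebRad S := by
    have h2 : ‖f - ι fh‖ / 2 ≤ chebRad S := by
      apply le_ciInf
      intro z
      have hbdd : BddAbove (Set.range fun u : S => ‖(u : X) - z‖) := by
        have hcomp : IsCompact ((fun u : X => ‖u - z‖) '' (ι '' {g : Y | ‖g‖ ≤ 1})) :=
          hK.image ((continuous_id.sub continuous_const).norm)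
        apply hcomp.bddAbove.mono
        rintro x ⟨u, rfl⟩
        exact ⟨u, u.2.1, rfl⟩
      have h3 : ‖f - z‖ ≤ ⨆ u : S, ‖(u : X) - z‖ := le_ciSup hbdd ⟨f, hfS⟩
      have h4 : ‖ι fh - z‖ ≤ ⨆ u : S, ‖(u : X) - z‖ := le_ciSup hbdd ⟨ι fh, hfhS⟩
      have h5 : ‖f - ι fh‖ ≤ ‖f - z‖ + ‖ι fh - z‖ := by
        have := norm_sub_le (f - z) (ι fh - z)
        have heq : (f - z) - (ι fh - z) = f - ι fh := by abel
        rwa [heq] at this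
      linarith
    linarith
  -- conclusion
  have hfinal : ‖f - ι ftil‖ ≤ ‖f - ι fh‖ + ‖ι ftil - ι fh‖ := by
    have h0 : f - ι ftil = (f - ι fh) - (ι ftil - ι fh) := by abel
    rw [h0]
    exact norm_sub_le _ _
  calc ‖f - ι ftil‖ ≤ ‖f - ι fh‖ + ‖ι ftil - ι fh‖ := hfinal
    _ ≤ 2 * chebRad S + E := by linarith
    _ = E + 2 * chebRad S := by ring
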